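/- Let the four 'inverted' coin states be |s_d^a⟩ = a(Σ_{c∈{↑,↓,←,→}} |c⟩ + √l|↺⟩ − (4+l)|d⟩) for d ∈ {↑,↓,←,→} and a ≠ 0. These four vectors together with |s_c⟩ span ℂ⁵, and each |s_d^a⟩ is a (−1)-eigenvector of the Grover coin C = 2|s_c⟩⟨s_c| − I₅. -/
import Mathlib


open Matrix

/-- The Grover self-loop coin state `|s_c⟩`, basis `0=↑, 1=↓, 2=←, 3=→, 4=↺`. -/
noncomputable def scState (l : ℝ) : Fin 5 → ℂ :=
  fun c => if c = 4 then (Real.sqrt l : ℂ) / (Real.sqrt (4 + l) : ℂ)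
           else 1 / (Real.sqrt (4 + l) : ℂ)

/-- The 5-dimensional Grover coin `C = 2|s_c⟩⟨s_c| − I₅`. -/
noncomputable def groverCoin (l : ℝ) : Matrix (Fin 5) (Fin 5) ℂ :=
  (2 : ℂ) • Matrix.vecMulVec (scState l) (star (scState l)) - 1

/-- The `inverted` coin state
`|s_d^a⟩ = a(Σ_{c∈{↑,↓,←,→}}|c⟩ + √l|↺⟩ − (4+l)|d⟩)`: entry `−(3+l)` at the
direction `d`, `1` at the other three directions, and `√l` at the loop. -/
noncomputable def sDState (l a : ℝ) (d : Fin 5) : Fin 5 → ℂ :=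
  fun c => (a : ℂ) * ((if c = 4 then (Real.sqrt l : ℂ) else 1) -
    if c = d then ((4 + l : ℝ) : ℂ) else 0)

/-- `|s_c⟩` is orthogonal to each inverted state `|s_d^a⟩` with `d ≠ ↺`. -/
lemma scState_dot_sDState (l a : ℝ) (hl : 0 < l) (d : Fin 5) (hd : d ≠ 4) :
    star (scState l) ⬝ᵥ sDState l a d = 0 := by
  have hsl : (Real.sqrt l : ℂ) * (Real.sqrt l : ℂ) = (l : ℂ) := by
    rw [← Complex.ofReal_mul, Real.mul_self_sqrt hl.le]
  have h4l : (0:ℝ) < 4 + l := by linarith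
  have hs4 : (Real.sqrt (4+l) : ℂ) ≠ 0 := by
    simpa using (Real.sqrt_ne_zero'.mpr h4l)
  fin_cases d <;> simp at hd ⊢ <;>
  · simp [dotProduct, Fin.sum_univ_five, scState, sDState, Complex.ofReal_add,
      show ((4:Fin 5) ≠ 0) by decide, show ((4:Fin 5) ≠ 1) by decide,
      show ((4:Fin 5) ≠ 2) by decide, show ((4:Fin 5) ≠ 3) by decide]
    field_simp
    ring_nf
    rw [show ((Real.sqrt l : ℂ))^2 = (l:ℂ) by rw [sq, hsl]]
    ring

/-- The four inverted states together with `|s_c⟩` span `ℂ⁵`, and each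
`|s_d^a⟩` (for `d ∈ {↑,↓,←,→}`, `a ≠ 0`) is a `(−1)`-eigenvector of the Grover
coin. -/
theorem sD_span_and_neg_eigenvectors (l a : ℝ) (hl : 0 < l) (ha : a ≠ 0) :
    Submodule.span ℂ
        ({scState l, sDState l a 0, sDState l a 1, sDState l a 2, sDState l a 3} :
          Set (Fin 5 → ℂ)) = ⊤ ∧
    ∀ d : Fin 5, d ≠ 4 →
      (groverCoin l).mulVec (sDState l a d) = -(sDState l a d) := by
  have h4l : (0:ℝ) < 4 + l := by linarith
  have hs4 : (Real.sqrt (4+l) : ℂ) ≠ 0 := by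
    simpa using (Real.sqrt_ne_zero'.mpr h4l)
  have hslne : (Real.sqrt l : ℂ) ≠ 0 := by
    simpa using (Real.sqrt_ne_zero'.mpr hl)
  have haC : (a : ℂ) ≠ 0 := by exact_mod_cast ha
  have h4lC : ((4:ℂ) + l) ≠ 0 := by
    have : ((4 + l : ℝ) : ℂ) ≠ 0 := by exact_mod_cast h4l.ne'
    simpa using this
  constructor
  · set S := Submodule.span ℂ
        ({scState l, sDState l a 0, sDState l a 1, sDState l a 2, sDState l a 3} :
          Set (Fin 5 → ℂ)) with hS
    have hsc : scState l ∈ S := Submodule.subset_span (by simp)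
    have hsd : ∀ d, d ≠ (4 : Fin 5) → sDState l a d ∈ S := by
      intro d hd
      fin_cases d <;> simp at hd ⊢ <;>
        exact Submodule.subset_span (by simp)
    set w : Fin 5 → ℂ := fun c => if c = 4 then (Real.sqrt l : ℂ) else 1 with hw
    have hwS : w ∈ S := by
      have := S.smul_mem ((Real.sqrt (4+l) : ℝ) : ℂ) hsc
      convert this using 1
      funext c
      simp only [scState, hw, Pi.smul_apply, smul_eq_mul]
      split <;> field_simp
    have he : ∀ d : Fin 5, d ≠ 4 → (fun j => if d = j then (1:ℂ) else 0) ∈ S := by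
      intro d hd
      have h1 : (fun j => if d = j then (1:ℂ) else 0)
          = (((a:ℂ) * ((4:ℂ)+l))⁻¹) • ((a:ℂ) • w - sDState l a d) := by
        funext j
        simp only [Pi.smul_apply, Pi.sub_apply, smul_eq_mul, sDState, hw]
        by_cases hj : j = d
        · subst hj
          simp [hd, Complex.ofReal_add]
          field_simp
          ring
        · simp [hj, Ne.symm hj]
      rw [h1]
      exact S.smul_mem _ (S.sub_mem (S.smul_mem _ hwS) (hsd d hd))
    have he4 : (fun j => if (4:Fin 5) = j then (1:ℂ) else 0) ∈ S := by
      have h1 : (fun j => if (4:Fin 5) = j then (1:ℂ) else 0)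
          = ((Real.sqrt l : ℂ)⁻¹) • (w - (fun j => if (0:Fin 5) = j then (1:ℂ) else 0)
              - (fun j => if (1:Fin 5) = j then (1:ℂ) else 0)
              - (fun j => if (2:Fin 5) = j then (1:ℂ) else 0)
              - (fun j => if (3:Fin 5) = j then (1:ℂ) else 0)) := by
        funext j
        fin_cases j <;> (simp [hw]; try field_simp)
      rw [h1]
      exact S.smul_mem _ (S.sub_mem (S.sub_mem (S.sub_mem (S.sub_mem hwS
        (he 0 (by decide))) (he 1 (by decide))) (he 2 (by decide))) (he 3 (by decide)))
    rw [eq_top_iff]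
    intro x _
    rw [pi_eq_sum_univ x]
    refine Submodule.sum_mem _ fun i _ => Submodule.smul_mem _ _ ?_
    fin_cases i
    exacts [he 0 (by decide), he 1 (by decide), he 2 (by decide), he 3 (by decide), he4]
  · intro d hd
    have key : (groverCoin l).mulVec (sDState l a d)
        = ((2:ℂ) * (star (scState l) ⬝ᵥ sDState l a d)) • scState l - sDState l a d := by
      funext i
      simp only [groverCoin, mulVec, dotProduct, Matrix.sub_apply, Matrix.smul_apply,
        vecMulVec_apply, Matrix.one_apply, Pi.sub_apply, Pi.smul_apply, smul_eq_mul,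
        Pi.star_apply, Fin.sum_univ_five]
      fin_cases i <;> simp <;> ring
    rw [key, scState_dot_sDState l a hl d hd]
    simp
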